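/- Fix x ∈ [0,1]^n and κ ∈ ℝ, and let Y = {y ∈ ℝ^n : 1_n^⊤ y = κ}. The function y ↦ f̃(x,y) = Σ_i f_i(x_i) + (γ/2)‖(p_i x_i)_i + Ly − (P_r/n)1_n‖² has a unique minimizer y* over Y; y* is characterized as the unique element of Y satisfying L y* = −(p_i x_i)_i + ((p^⊤ x)/n) 1_n, equivalently the unique element of Y with L((p_i x_i)_i + L y*) = 0; and y* is also the unique point of Y at which the auxiliary dynamics ẏ = −αγ L((p_i x_i)_i + Ly) vanish. -/

import Mathlib

open Matrix

lemma aux_surj (n : ℕ) (hn : 2 ≤ n) (L : Matrix (Fin n) (Fin n) ℝ)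
    (hL1 : L *ᵥ (fun _ => (1 : ℝ)) = 0)
    (hLker : ∀ v : Fin n → ℝ, L *ᵥ v = 0 → ∃ c : ℝ, v = fun _ => c)
    (hsum0 : ∀ v : Fin n → ℝ, ∑ i, (L *ᵥ v) i = 0)
    (b : Fin n → ℝ) (hb : ∑ i, b i = 0) : ∃ y, L *ᵥ y = b := by
  have hn0 : (n : ℝ) ≠ 0 := by positivity
  set T := Matrix.mulVecLin L with hT
  let s : (Fin n → ℝ) →ₗ[ℝ] ℝ :=
  { toFun := fun v => ∑ i, v i,
    map_add' := fun u v => by simp [Finset.sum_add_distrib],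
    map_smul' := fun c v => by simp [Finset.mul_sum] }
  have hker : LinearMap.ker T = Submodule.span ℝ {(fun _ => (1:ℝ))} := by
    ext v
    constructor
    · intro hv
      obtain ⟨c, rfl⟩ := hLker v (by simpa [hT] using hv)
      exact Submodule.mem_span_singleton.mpr ⟨c, by funext i; simp⟩
    · intro hv
      obtain ⟨c, rfl⟩ := Submodule.mem_span_singleton.mp hv
      simp only [LinearMap.mem_ker, hT, Matrix.mulVecLin_apply, Matrix.mulVec_smul, hL1,
        smul_zero]
  have h1ne : (fun _ => (1:ℝ)) ≠ (0 : Fin n → ℝ) := by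
    intro h
    exact one_ne_zero (congrFun h ⟨0, by omega⟩)
  have hkf : Module.finrank ℝ (LinearMap.ker T) = 1 := by
    rw [hker]; exact finrank_span_singleton h1ne
  have hrk : Module.finrank ℝ (LinearMap.range T) + 1 = n := by
    have := LinearMap.finrank_range_add_finrank_ker T
    simpa [hkf] using this
  have hssurj : LinearMap.range s = ⊤ := by
    rw [LinearMap.range_eq_top]
    intro c
    refine ⟨fun _ => c / n, ?_⟩
    show ∑ _i : Fin n, c / n = c
    rw [Finset.sum_const]
    simp
    field_simp
  have hks : Module.finrank ℝ (LinearMap.ker s) + 1 = n := by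
    have := LinearMap.finrank_range_add_finrank_ker s
    rw [hssurj] at this
    simpa [add_comm] using this
  have hle : LinearMap.range T ≤ LinearMap.ker s := by
    rintro w ⟨v, rfl⟩
    show ∑ i, (L *ᵥ v) i = 0
    exact hsum0 v
  have heq : LinearMap.range T = LinearMap.ker s :=
    Submodule.eq_of_le_of_finrank_eq hle (by omega)
  have hbmem : b ∈ LinearMap.ker s := hb
  rw [← heq] at hbmem
  obtain ⟨y, hy⟩ := hbmem
  exact ⟨y, hy⟩

/-- **Closed-form auxiliary solution** (Lemma: Closed Form Auxiliary Solution).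
For fixed `x ∈ [0,1]ⁿ`, the map `y ↦ f̃(x,y)` has a unique minimizer `y*` over
`Y = {y : 1ᵀy = κ}`, characterized as the unique element of `Y` with
`Ly* = -(pᵢxᵢ)ᵢ + ((pᵀx)/n)1`, equivalently the unique element of `Y` with
`L((pᵢxᵢ)ᵢ + Ly*) = 0`; `y*` is also the unique point of `Y` at which the auxiliary
dynamics `ẏ = -αγL((pᵢxᵢ)ᵢ + Ly)` vanish. -/
theorem binpad_closed_form_auxiliary_solution
    (n : ℕ) (hn : 2 ≤ n)
    (L : Matrix (Fin n) (Fin n) ℝ)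
    (hLsymm : L.IsSymm) (hLpsd : L.PosSemidef)
    (hL1 : L *ᵥ (fun _ => (1 : ℝ)) = 0)
    (hLker : ∀ v : Fin n → ℝ, L *ᵥ v = 0 → ∃ c : ℝ, v = fun _ => c)
    (f : Fin n → ℝ → ℝ) (p : Fin n → ℝ) (γ α : ℝ) (hγ : 0 < γ) (hα : 0 < α)
    (Pr κ : ℝ)
    (Ftil : (Fin n → ℝ) → (Fin n → ℝ) → ℝ)
    (hFtil : Ftil = fun x y => (∑ i, f i (x i)) +
      γ / 2 * ∑ i, (p i * x i + (L *ᵥ y) i - Pr / n) ^ 2)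
    (x : Fin n → ℝ) (hx : ∀ i, x i ∈ Set.Icc (0 : ℝ) 1) :
    ∃ ystar : Fin n → ℝ,
      (∑ i, ystar i = κ) ∧
      -- y* minimizes y ↦ f̃(x,y) over Y, uniquely
      (∀ y : Fin n → ℝ, ∑ i, y i = κ → Ftil x ystar ≤ Ftil x y) ∧
      (∀ y' : Fin n → ℝ, ∑ i, y' i = κ →
        (∀ y : Fin n → ℝ, ∑ i, y i = κ → Ftil x y' ≤ Ftil x y) → y' = ystar) ∧
      -- characterization: the unique element of Y with Ly* = -(pᵢxᵢ)ᵢ + ((pᵀx)/n)1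
      (L *ᵥ ystar = fun i => -(p i * x i) + (p ⬝ᵥ x) / n) ∧
      (∀ y' : Fin n → ℝ, ∑ i, y' i = κ →
        (L *ᵥ y' = fun i => -(p i * x i) + (p ⬝ᵥ x) / n) → y' = ystar) ∧
      -- equivalently: the unique element of Y with L((pᵢxᵢ)ᵢ + Ly*) = 0
      (L *ᵥ (fun i => p i * x i + (L *ᵥ ystar) i) = 0) ∧
      (∀ y' : Fin n → ℝ, ∑ i, y' i = κ →
        L *ᵥ (fun i => p i * x i + (L *ᵥ y') i) = 0 → y' = ystar) ∧
      -- y* is the unique point of Y where the auxiliary dynamics vanish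
      (-(α * γ) • (L *ᵥ fun i => p i * x i + (L *ᵥ ystar) i) = 0) ∧
      (∀ y' : Fin n → ℝ, ∑ i, y' i = κ →
        -(α * γ) • (L *ᵥ fun i => p i * x i + (L *ᵥ y') i) = 0 → y' = ystar) := by
  have hn0 : (n : ℝ) ≠ 0 := by positivity
  -- sums of L *ᵥ v vanish
  have hsum0 : ∀ v : Fin n → ℝ, ∑ i, (L *ᵥ v) i = 0 := by
    intro v
    have : ∑ i, (L *ᵥ v) i = (fun _ => (1:ℝ)) ⬝ᵥ (L *ᵥ v) := by
      simp [dotProduct]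
    rw [this, Matrix.dotProduct_mulVec, ← Matrix.mulVec_transpose, hLsymm.eq, hL1]
    simp
  set b : Fin n → ℝ := fun i => -(p i * x i) + (p ⬝ᵥ x) / n with hbdef
  have hbsum : ∑ i, b i = 0 := by
    simp only [hbdef, Finset.sum_add_distrib, Finset.sum_neg_distrib, Finset.sum_const,
      Finset.card_univ, Fintype.card_fin, nsmul_eq_mul, dotProduct]
    field_simp
    ring
  obtain ⟨y0, hy0⟩ := aux_surj n hn L hL1 hLker hsum0 b hbsum
  set c1 : ℝ := (κ - ∑ i, y0 i) / n with hc1def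
  set ystar : Fin n → ℝ := y0 + c1 • (fun _ => (1:ℝ)) with hysdef
  have hsumy : ∑ i, ystar i = κ := by
    simp only [hysdef, Pi.add_apply, Pi.smul_apply, smul_eq_mul, mul_one,
      Finset.sum_add_distrib, Finset.sum_const, Finset.card_univ, Fintype.card_fin,
      nsmul_eq_mul, hc1def]
    field_simp
    ring
  have hLy : L *ᵥ ystar = b := by
    rw [hysdef, Matrix.mulVec_add, Matrix.mulVec_smul, hL1, smul_zero, add_zero, hy0]
  -- uniqueness from the linear characterization
  have huniq : ∀ y' : Fin n → ℝ, ∑ i, y' i = κ → L *ᵥ y' = b → y' = ystar := by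
    intro y' hs hLy'
    have hz : L *ᵥ (y' - ystar) = 0 := by
      rw [Matrix.mulVec_sub, hLy', hLy, sub_self]
    obtain ⟨c, hc⟩ := hLker _ hz
    have hzsum : ∑ i, (y' - ystar) i = 0 := by
      simp [Finset.sum_sub_distrib, hs, hsumy]
    rw [hc] at hzsum
    simp only [Finset.sum_const, Finset.card_univ, Fintype.card_fin, nsmul_eq_mul] at hzsum
    have hc0 : c = 0 := by
      rcases mul_eq_zero.mp hzsum with h | h
      · exact absurd h hn0
      · exact h
    have : y' - ystar = 0 := by rw [hc, hc0]; funext i; simp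
    exact sub_eq_zero.mp this
  -- the residual at ystar is constant
  have hres : ∀ i, p i * x i + (L *ᵥ ystar) i - Pr / n = (p ⬝ᵥ x) / n - Pr / n := by
    intro i
    rw [hLy]
    simp [hbdef]
  -- Ftil expansion: for any y in Y
  have hFge : ∀ y : Fin n → ℝ, Ftil x y = Ftil x ystar +
      γ / 2 * ∑ i, ((L *ᵥ (y - ystar)) i) ^ 2 := by
    intro y
    have hdec : ∀ i, p i * x i + (L *ᵥ y) i - Pr / n =
        (p i * x i + (L *ᵥ ystar) i - Pr / n) + (L *ᵥ (y - ystar)) i := by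
      intro i
      rw [Matrix.mulVec_sub]
      simp
      ring
    simp only [hFtil]
    have : ∑ i, (p i * x i + (L *ᵥ y) i - Pr / n) ^ 2 =
        ∑ i, ((p i * x i + (L *ᵥ ystar) i - Pr / n) + (L *ᵥ (y - ystar)) i) ^ 2 := by
      refine Finset.sum_congr rfl fun i _ => by rw [hdec i]
    rw [this]
    have hexp : ∑ i, ((p i * x i + (L *ᵥ ystar) i - Pr / n) + (L *ᵥ (y - ystar)) i) ^ 2 =
        ∑ i, (p i * x i + (L *ᵥ ystar) i - Pr / n) ^ 2 +
        2 * ((p ⬝ᵥ x) / n - Pr / n) * ∑ i, (L *ᵥ (y - ystar)) i +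
        ∑ i, ((L *ᵥ (y - ystar)) i) ^ 2 := by
      rw [Finset.mul_sum, ← Finset.sum_add_distrib, ← Finset.sum_add_distrib]
      refine Finset.sum_congr rfl fun i _ => by rw [hres i]; ring
    rw [hexp, hsum0]
    ring
  refine ⟨ystar, hsumy, ?_, ?_, ?_, ?_, ?_, ?_, ?_, ?_⟩
  · -- minimizer
    intro y hy
    rw [hFge y]
    have : 0 ≤ γ / 2 * ∑ i, ((L *ᵥ (y - ystar)) i) ^ 2 := by
      apply mul_nonneg (by linarith)
      exact Finset.sum_nonneg fun i _ => sq_nonneg _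
    linarith
  · -- uniqueness of minimizer
    intro y' hs hmin
    have h1 : Ftil x y' ≤ Ftil x ystar := hmin ystar hsumy
    have h2 : Ftil x y' = Ftil x ystar + γ / 2 * ∑ i, ((L *ᵥ (y' - ystar)) i) ^ 2 :=
      hFge y'
    have hsumsq : ∑ i, ((L *ᵥ (y' - ystar)) i) ^ 2 = 0 := by
      have hnn : 0 ≤ ∑ i, ((L *ᵥ (y' - ystar)) i) ^ 2 :=
        Finset.sum_nonneg fun i _ => sq_nonneg _
      nlinarith
    have hz : L *ᵥ (y' - ystar) = 0 := by
      funext i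
      have := (Finset.sum_eq_zero_iff_of_nonneg (fun i _ => sq_nonneg _)).mp hsumsq i
        (Finset.mem_univ i)
      exact pow_eq_zero_iff (by norm_num) |>.mp this
    have : L *ᵥ y' = b := by
      rw [Matrix.mulVec_sub] at hz
      have := sub_eq_zero.mp hz
      rw [this, hLy]
    exact huniq y' hs this
  · exact hLy
  · exact huniq
  · -- L (px + L ystar) = 0
    have : (fun i => p i * x i + (L *ᵥ ystar) i) =
        ((p ⬝ᵥ x) / n) • (fun _ => (1:ℝ)) := by
      funext i
      rw [hLy]
      simp [hbdef]
    rw [this, Matrix.mulVec_smul, hL1, smul_zero]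
  · -- uniqueness from L(px + Ly') = 0
    intro y' hs h0
    obtain ⟨c, hc⟩ := hLker _ h0
    have hcsum : ∑ i, (p i * x i + (L *ᵥ y') i) = n * c := by
      rw [hc]
      simp [Finset.sum_const, mul_comm]
    rw [Finset.sum_add_distrib, hsum0, add_zero] at hcsum
    have hcval : c = (p ⬝ᵥ x) / n := by
      rw [dotProduct]
      field_simp
      linarith [hcsum]
    have : L *ᵥ y' = b := by
      funext i
      have := congrFun hc i
      simp only [hbdef]
      have h' : (L *ᵥ y') i = c - p i * x i := by linarith [this]
      rw [h', hcval]
      ring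
    exact huniq y' hs this
  · -- dynamics vanish at ystar
    have : (fun i => p i * x i + (L *ᵥ ystar) i) =
        ((p ⬝ᵥ x) / n) • (fun _ => (1:ℝ)) := by
      funext i
      rw [hLy]
      simp [hbdef]
    rw [this, Matrix.mulVec_smul, hL1, smul_zero, smul_zero]
  · -- uniqueness from dynamics
    intro y' hs h0
    have hαγ : -(α * γ) ≠ 0 := by
      simp only [neg_ne_zero]
      positivity
    have h0' : L *ᵥ (fun i => p i * x i + (L *ᵥ y') i) = 0 := by
      rcases smul_eq_zero.mp h0 with h | h
      · exact absurd h hαγ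
      · exact h
    obtain ⟨c, hc⟩ := hLker _ h0'
    have hcsum : ∑ i, (p i * x i + (L *ᵥ y') i) = n * c := by
      rw [hc]
      simp [Finset.sum_const, mul_comm]
    rw [Finset.sum_add_distrib, hsum0, add_zero] at hcsum
    have hcval : c = (p ⬝ᵥ x) / n := by
      rw [dotProduct]
      field_simp
      linarith [hcsum]
    have : L *ᵥ y' = b := by
      funext i
      have := congrFun hc i
      simp only [hbdef]
      have h' : (L *ᵥ y') i = c - p i * x i := by linarith [this]
      rw [h', hcval]
      ring
    exact huniq y' hs this
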